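/- Let G ⊂ ℝ^k be bounded open with C¹ boundary, k ≤ n, and φ ∈ C¹(ℝ^k, ℝ^n) such that φ restricted to the closure of G is injective with Jacobian Jφ(y) := [det((Dφ)ᵗ Dφ)(y)]^{1/2} > 0 for all y in the closure of G. Set μ := H^k ⌞ φ(G). Then there exist C, r̄ ∈ (0,∞) such that r^k/C ≤ μ(B_r(x)) ≤ C r^k for all x ∈ spt μ and r ∈ (0, r̄]. -/

import Mathlib

open MeasureTheory Metric Filter Set Topology

noncomputable section
set_option maxHeartbeats 1000000
open scoped ENNReal NNReal

/-- The support of a measure `μ` on `ℝ^n`: points all of whose balls have positive measure. -/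
def spt {n : ℕ} (μ : Measure (EuclideanSpace ℝ (Fin n))) : Set (EuclideanSpace ℝ (Fin n)) :=
  {x | ∀ r : ℝ, 0 < r → 0 < μ (Metric.ball x r)}

/-- The set of `h`-superdensity points of `E` with respect to `μ`. -/
def sdp {n : ℕ} (μ : Measure (EuclideanSpace ℝ (Fin n))) (h : ℝ)
    (E : Set (EuclideanSpace ℝ (Fin n))) : Set (EuclideanSpace ℝ (Fin n)) :=
  {x | x ∈ spt μ ∧
    Filter.Tendsto
      (fun r : ℝ => μ (Metric.ball x r \ E) / (μ (Metric.ball x r) * ENNReal.ofReal (r ^ h)))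
      (nhdsWithin 0 (Set.Ioi 0)) (nhds 0)}

/-- The base operator `b^{μ,h}` associated to `μ` and `h`. -/
def baseOp {n : ℕ} (μ : Measure (EuclideanSpace ℝ (Fin n))) (h : ℝ)
    (A : Set (EuclideanSpace ℝ (Fin n))) : Set (EuclideanSpace ℝ (Fin n)) :=
  {x | x ∈ spt μ ∧
    0 < Filter.limsup
      (fun r : ℝ => μ (Metric.ball x r ∩ A) / (μ (Metric.ball x r) * ENNReal.ofReal (r ^ h)))
      (nhdsWithin 0 (Set.Ioi 0))}

/-- The matrix of the differential of `φ` at `y`, with columns `Dφ(y)·e_j`. -/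
def Dmat {k n : ℕ} (φ : EuclideanSpace ℝ (Fin k) → EuclideanSpace ℝ (Fin n))
    (y : EuclideanSpace ℝ (Fin k)) : Matrix (Fin n) (Fin k) ℝ :=
  Matrix.of fun i j => fderiv ℝ φ y (EuclideanSpace.single j 1) i


variable {k n : ℕ}

local notation "E" => EuclideanSpace ℝ (Fin k)
local notation "F" => EuclideanSpace ℝ (Fin n)

lemma fderiv_inj {k n : ℕ} (φ : EuclideanSpace ℝ (Fin k) → EuclideanSpace ℝ (Fin n))
    (y : EuclideanSpace ℝ (Fin k)) (h : 0 < (Matrix.transpose (Dmat φ y) * Dmat φ y).det) :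
    Function.Injective (fderiv ℝ φ y) := by
  set D := fderiv ℝ φ y
  rw [← ContinuousLinearMap.coe_coe D, ← LinearMap.ker_eq_bot, LinearMap.ker_eq_bot']
  intro v hv
  have hv' : D v = 0 := hv
  have key : (Dmat φ y).mulVec (fun j => v j) = fun i => (D v) i := by
    funext i
    have hvsum : v = ∑ j, (v j) • EuclideanSpace.single j 1 := by
      ext i
      rw [WithLp.ofLp_sum, Finset.sum_apply]
      simp [EuclideanSpace.single_apply, Finset.sum_ite_eq']
    calc (Dmat φ y).mulVec (fun j => v j) i = ∑ j, (v j) * (D (EuclideanSpace.single j 1) i) := by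
          simp [Matrix.mulVec, dotProduct, Dmat, mul_comm]; rfl
      _ = (D v) i := by
          conv_rhs => rw [hvsum]
          rw [map_sum, WithLp.ofLp_sum, Finset.sum_apply]
          simp
  have h2 : (Matrix.transpose (Dmat φ y) * Dmat φ y).mulVec (fun j => v j) = 0 := by
    rw [← Matrix.mulVec_mulVec, key]
    have : (fun i => (D v) i) = (0 : Fin n → ℝ) := by funext i; simp [hv']
    rw [this, Matrix.mulVec_zero]
  have h3 : (fun j => v j) = (0 : Fin k → ℝ) := Matrix.eq_zero_of_mulVec_eq_zero (ne_of_gt h) h2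
  ext i
  exact congrFun h3 i

lemma aux_frontier {X : Type*} [TopologicalSpace X] {s G : Set X} (hG : IsOpen G)
    (hs : IsPreconnected s) (h1 : (s ∩ G).Nonempty) (h2 : (s \ G).Nonempty) :
    (s ∩ frontier G).Nonempty := by
  by_contra hfr
  rw [Set.not_nonempty_iff_eq_empty] at hfr
  have hsub : s ⊆ interior G ∪ (closure G)ᶜ := by
    intro x hx
    by_cases hxc : x ∈ closure G
    · left
      by_contra hxi
      have : x ∈ s ∩ frontier G := ⟨hx, hxc, hxi⟩
      rw [hfr] at this
      exact this
    · exact Or.inr hxc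
  have h1' : (s ∩ interior G).Nonempty := by
    obtain ⟨x, hxs, hxG⟩ := h1
    exact ⟨x, hxs, by rwa [hG.interior_eq]⟩
  have h2' : (s ∩ (closure G)ᶜ).Nonempty := by
    obtain ⟨x, hxs, hxG⟩ := h2
    refine ⟨x, hxs, fun hxc => ?_⟩
    have : x ∈ s ∩ frontier G := ⟨hxs, hxc, by rwa [hG.interior_eq]⟩
    rw [hfr] at this
    exact this
  obtain ⟨x, _, hxu, hxv⟩ := hs (interior G) (closure G)ᶜ isOpen_interior isClosed_closure.isOpen_compl hsub h1' h2'
  exact hxv (subset_closure (interior_subset hxu))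

lemma haus_le_image {k n : ℕ} {s : Set (EuclideanSpace ℝ (Fin k))}
    {f : EuclideanSpace ℝ (Fin k) → EuclideanSpace ℝ (Fin n)} {K : ℝ≥0}
    (h : ∀ x ∈ s, ∀ y ∈ s, dist x y ≤ (K : ℝ) * dist (f x) (f y))
    {A : Set (EuclideanSpace ℝ (Fin k))} (hA : A ⊆ s) {d : ℝ} (hd : 0 ≤ d) :
    μH[d] A ≤ (K : ℝ≥0∞) ^ d * μH[d] (f '' A) := by
  set ι : s → EuclideanSpace ℝ (Fin k) := Subtype.val
  have hι : Isometry ι := isometry_subtype_coe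
  set g : s → EuclideanSpace ℝ (Fin n) := fun x => f (ι x)
  have hg : AntilipschitzWith K g := by
    intro x y
    rw [edist_dist, edist_dist, ← ENNReal.ofReal_coe_nnreal, ← ENNReal.ofReal_mul K.coe_nonneg]
    exact ENNReal.ofReal_le_ofReal (by have := h x x.2 y y.2; rw [← hι.dist_eq x y]; exact this)
  set t : Set s := ι ⁻¹' A
  have himg : ι '' t = A := by
    rw [Subtype.image_preimage_coe]
    exact Set.inter_eq_self_of_subset_right hA
  calc μH[d] A = μH[d] (ι '' t) := by rw [himg]
    _ = μH[d] t := by rw [hι.hausdorffMeasure_image (Or.inl hd)]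
    _ ≤ (K : ℝ≥0∞) ^ d * μH[d] (g '' t) := hg.le_hausdorffMeasure_image hd t
    _ ≤ (K : ℝ≥0∞) ^ d * μH[d] (f '' A) := by
        gcongr
        rw [← himg, Set.image_image]

lemma haar_inst (k : ℕ) :
    Measure.IsAddHaarMeasure (μH[(k : ℝ)] : Measure (EuclideanSpace ℝ (Fin k))) := by
  have hk : ((Module.finrank ℝ (EuclideanSpace ℝ (Fin k)) : ℕ) : ℝ) = (k : ℝ) := by
    rw [finrank_euclideanSpace_fin]
  rw [← hk]
  infer_instance

lemma haus_ball_scaling {k : ℕ} (z : EuclideanSpace ℝ (Fin k)) {ρ : ℝ} (hρ : 0 < ρ) :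
    μH[(k : ℝ)] (ball z ρ)
      = ENNReal.ofReal (ρ ^ k) * μH[(k : ℝ)] (ball (0 : EuclideanSpace ℝ (Fin k)) 1) := by
  haveI := haar_inst k
  rcases Nat.eq_zero_or_pos k with hk | hk
  · subst hk
    haveI : Subsingleton (EuclideanSpace ℝ (Fin 0)) := by
      constructor; intro a b; ext i; exact absurd i.2 (by simp)
    have h1 : ball z ρ = Set.univ := by
      ext w; simp [Subsingleton.elim w z, hρ, mem_ball]
    have h2 : ball (0 : EuclideanSpace ℝ (Fin 0)) 1 = Set.univ := by
      ext w; simp [Subsingleton.elim w (0 : EuclideanSpace ℝ (Fin 0)), mem_ball]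
    simp [h1, h2]
  · haveI : Nontrivial (EuclideanSpace ℝ (Fin k)) := by
      have : Nonempty (Fin k) := ⟨⟨0, hk⟩⟩
      exact ⟨EuclideanSpace.single ⟨0, hk⟩ 1, 0, by
        intro hcontr
        have := congrArg (fun w : EuclideanSpace ℝ (Fin k) => w ⟨0, hk⟩) hcontr
        simp [EuclideanSpace.single_apply] at this⟩
    have := Measure.addHaar_ball (μH[(k : ℝ)] : Measure (EuclideanSpace ℝ (Fin k))) z hρ.le
    rwa [finrank_euclideanSpace_fin] at this

lemma local_antilip {φ : E → F} (hφ : ContDiff ℝ 1 φ) (a : E)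
    (ha : Function.Injective (fderiv ℝ φ a)) :
    ∃ c > (0:ℝ), ∃ ε > (0:ℝ), ∀ x ∈ ball a ε, ∀ y ∈ ball a ε, c * ‖x - y‖ ≤ ‖φ x - φ y‖ := by
  obtain ⟨K, hK0, hK⟩ := LinearMap.exists_antilipschitzWith ((fderiv ℝ φ a : E →L[ℝ] F) : E →ₗ[ℝ] F)
    (LinearMap.ker_eq_bot.mpr ha)
  have hKpos : (0:ℝ) < (K:ℝ) := hK0
  set c : ℝ := (2 * (K:ℝ))⁻¹ with hc
  have hcpos : 0 < c := by positivity
  have hcont : ContinuousAt (fderiv ℝ φ) a := (hφ.continuous_fderiv one_ne_zero).continuousAt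
  obtain ⟨ε, hε, hball⟩ := Metric.continuousAt_iff.mp hcont c hcpos
  refine ⟨c, hcpos, ε, hε, fun x hx y hy => ?_⟩
  have hdiff : ∀ z ∈ ball a ε, DifferentiableAt ℝ φ z := fun z _ => hφ.differentiable one_ne_zero z
  have hbound : ∀ z ∈ ball a ε, ‖fderiv ℝ φ z - fderiv ℝ φ a‖ ≤ c := by
    intro z hz
    have := hball (show dist z a < ε from hz)
    rw [dist_eq_norm] at this
    exact this.le
  have hmv := (convex_ball a ε).norm_image_sub_le_of_norm_fderiv_le' hdiff hbound hy hx
  -- hmv : ‖φ x - φ y - (fderiv ℝ φ a) (x - y)‖ ≤ c * ‖x - y‖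
  have hlow : (K:ℝ)⁻¹ * ‖x - y‖ ≤ ‖(fderiv ℝ φ a) (x - y)‖ := by
    have h1 : ‖x - y‖ ≤ (K:ℝ) * ‖(fderiv ℝ φ a) (x - y)‖ := by
      have := hK.le_mul_dist (x) (y)
      simpa [dist_eq_norm, map_sub] using this
    rw [inv_mul_le_iff₀ hKpos] at *
    linarith [h1]
  have htri : ‖(fderiv ℝ φ a) (x - y)‖ ≤ ‖φ x - φ y‖ + ‖φ x - φ y - (fderiv ℝ φ a) (x - y)‖ := by
    have h2 : φ x - φ y - (φ x - φ y - (fderiv ℝ φ a) (x - y)) = (fderiv ℝ φ a) (x - y) := by abel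
    calc ‖(fderiv ℝ φ a) (x - y)‖
        = ‖(φ x - φ y) - (φ x - φ y - (fderiv ℝ φ a) (x - y))‖ := by rw [h2]
      _ ≤ ‖φ x - φ y‖ + ‖φ x - φ y - (fderiv ℝ φ a) (x - y)‖ := norm_sub_le _ _
  have hKc : (K:ℝ)⁻¹ - c = c := by
    field_simp [hc]
    rw [hc, mul_inv, ← mul_assoc, mul_comm (K:ℝ) 2⁻¹, mul_assoc, mul_inv_cancel₀ hKpos.ne']
    norm_num
  nlinarith [hmv, hlow, htri, norm_nonneg (x - y)]

lemma global_lip {φ : E → F} (hφ : ContDiff ℝ 1 φ) {s : Set E} (hs : Bornology.IsBounded s) :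
    ∃ L : ℝ, 0 < L ∧ ∀ x ∈ s, ∀ y ∈ s, ‖φ x - φ y‖ ≤ L * ‖x - y‖ := by
  obtain ⟨R, hR⟩ := hs.subset_closedBall 0
  have hcomp : IsCompact (closedBall (0:E) R) := isCompact_closedBall 0 R
  obtain ⟨M, hM⟩ := hcomp.exists_bound_of_continuousOn
    ((hφ.continuous_fderiv one_ne_zero).continuousOn)
  refine ⟨max M 0 + 1, by positivity, fun x hx y hy => ?_⟩
  have hbound : ∀ z ∈ closedBall (0:E) R, ‖fderiv ℝ φ z‖ ≤ max M 0 + 1 :=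
    fun z hz => le_trans (hM z hz) (by linarith [le_max_left M 0])
  have hmv := (convex_closedBall (0:E) R).norm_image_sub_le_of_norm_fderiv_le
    (fun z _ => hφ.differentiable one_ne_zero z) hbound (hR hy) (hR hx)
  exact hmv

lemma global_antilip {φ : E → F} (hφ : ContDiff ℝ 1 φ) {s : Set E} (hs : IsCompact s)
    (hinj : Set.InjOn φ s) (hD : ∀ y ∈ s, Function.Injective (fderiv ℝ φ y)) :
    ∃ c > (0:ℝ), ∀ x ∈ s, ∀ y ∈ s, c * ‖x - y‖ ≤ ‖φ x - φ y‖ := by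
  rcases s.eq_empty_or_nonempty with hse | hse
  · exact ⟨1, one_pos, by simp [hse]⟩
  have H : ∀ a : s, ∃ cε : ℝ × ℝ, 0 < cε.1 ∧ 0 < cε.2 ∧
      ∀ x ∈ ball (a:E) cε.2, ∀ y ∈ ball (a:E) cε.2, cε.1 * ‖x - y‖ ≤ ‖φ x - φ y‖ := by
    intro a
    obtain ⟨c, hc, ε, hε, hp⟩ := local_antilip hφ (a:E) (hD a a.2)
    exact ⟨(c, ε), hc, hε, hp⟩
  choose cε hc1 hc2 hc3 using H
  have hcover : s ⊆ ⋃ a : s, ball (a:E) ((cε a).2 / 2) := by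
    intro x hx
    exact Set.mem_iUnion.mpr ⟨⟨x, hx⟩, by simpa using half_pos (hc2 ⟨x, hx⟩)⟩
  obtain ⟨t, ht⟩ := hs.elim_finite_subcover (fun a : s => ball (a:E) ((cε a).2 / 2))
    (fun _ => isOpen_ball) hcover
  have htne : t.Nonempty := by
    obtain ⟨x, hx⟩ := hse
    obtain ⟨a, ha, -⟩ := Set.mem_iUnion₂.mp (ht hx)
    exact ⟨a, ha⟩
  set δ : ℝ := t.inf' htne (fun a => (cε a).2 / 2) with hδdef
  set c0 : ℝ := t.inf' htne (fun a => (cε a).1) with hc0def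
  have hδpos : 0 < δ := by
    rw [hδdef, Finset.lt_inf'_iff]
    exact fun a _ => half_pos (hc2 a)
  have hc0pos : 0 < c0 := by
    rw [hc0def, Finset.lt_inf'_iff]
    exact fun a _ => hc1 a
  -- near pairs
  have hnear : ∀ x ∈ s, ∀ y ∈ s, dist x y < δ → c0 * ‖x - y‖ ≤ ‖φ x - φ y‖ := by
    intro x hx y hy hxy
    obtain ⟨a, hat, hxa⟩ := Set.mem_iUnion₂.mp (ht hx)
    have hya : y ∈ ball (a:E) (cε a).2 := by
      have h1 : dist y (a:E) ≤ dist y x + dist x (a:E) := dist_triangle _ _ _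
      have h2 : dist x (a:E) < (cε a).2 / 2 := hxa
      have h3 : δ ≤ (cε a).2 / 2 := Finset.inf'_le _ hat
      rw [mem_ball]
      rw [dist_comm] at hxy
      linarith
    have hxa' : x ∈ ball (a:E) (cε a).2 :=
      ball_subset_ball (by linarith [hc2 a]) hxa
    calc c0 * ‖x - y‖ ≤ (cε a).1 * ‖x - y‖ := by
          apply mul_le_mul_of_nonneg_right (Finset.inf'_le _ hat) (norm_nonneg _)
      _ ≤ ‖φ x - φ y‖ := hc3 a x hxa' y hya
  -- far pairs
  set Kset : Set (E × E) := {p | p.1 ∈ s ∧ p.2 ∈ s ∧ δ ≤ dist p.1 p.2} with hKdef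
  rcases Kset.eq_empty_or_nonempty with hKe | hKne
  · refine ⟨c0, hc0pos, fun x hx y hy => ?_⟩
    apply hnear x hx y hy
    by_contra hcon
    push_neg at hcon
    have : (x, y) ∈ Kset := ⟨hx, hy, hcon⟩
    rw [hKe] at this
    exact this
  · have hKcl : IsClosed Kset := by
      have h1 : IsClosed {p : E × E | δ ≤ dist p.1 p.2} :=
        isClosed_le continuous_const (continuous_fst.dist continuous_snd)
      have heq : Kset = ((Prod.fst ⁻¹' s) ∩ (Prod.snd ⁻¹' s)) ∩ {p : E × E | δ ≤ dist p.1 p.2} := by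
        ext p
        simp only [hKdef, Set.mem_setOf_eq, Set.mem_inter_iff, Set.mem_preimage, and_assoc]
      rw [heq]
      exact ((hs.isClosed.preimage continuous_fst).inter
        (hs.isClosed.preimage continuous_snd)).inter h1
    have hKcomp : IsCompact Kset := (hs.prod hs).of_isClosed_subset hKcl
      (fun p hp => ⟨hp.1, hp.2.1⟩)
    have hgc : ContinuousOn (fun p : E × E => ‖φ p.1 - φ p.2‖) Kset :=
      (((hφ.continuous.comp continuous_fst).sub
        (hφ.continuous.comp continuous_snd)).norm).continuousOn
    obtain ⟨p0, hp0K, hp0min⟩ := hKcomp.exists_isMinOn hKne hgc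
    have hm : 0 < ‖φ p0.1 - φ p0.2‖ := by
      rw [norm_pos_iff, sub_ne_zero]
      intro heq
      have heq2 : p0.1 = p0.2 := hinj hp0K.1 hp0K.2.1 heq
      have hd0 := hp0K.2.2
      rw [heq2, dist_self] at hd0
      exact absurd hd0 (not_le.mpr hδpos)
    obtain ⟨R, hRpos, hR⟩ := hs.isBounded.subset_closedBall_lt 0 0
    have hdiam : ∀ x ∈ s, ∀ y ∈ s, ‖x - y‖ ≤ 2 * R := by
      intro x hx y hy
      have h1 := hR hx
      have h2 := hR hy
      rw [mem_closedBall, dist_zero_right] at h1 h2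
      calc ‖x - y‖ ≤ ‖x‖ + ‖y‖ := norm_sub_le _ _
        _ ≤ 2 * R := by linarith
    set m := ‖φ p0.1 - φ p0.2‖ with hmdef
    refine ⟨min c0 (m / (2 * R)), lt_min hc0pos (div_pos hm (by linarith)), fun x hx y hy => ?_⟩
    rcases lt_or_ge (dist x y) δ with hcase | hcase
    · calc min c0 (m / (2 * R)) * ‖x - y‖ ≤ c0 * ‖x - y‖ :=
          mul_le_mul_of_nonneg_right (min_le_left _ _) (norm_nonneg _)
        _ ≤ ‖φ x - φ y‖ := hnear x hx y hy hcase
    · have hxyK : (x, y) ∈ Kset := ⟨hx, hy, hcase⟩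
      have hmle : m ≤ ‖φ x - φ y‖ := (isMinOn_iff.mp hp0min) (x, y) hxyK
      calc min c0 (m / (2 * R)) * ‖x - y‖ ≤ (m / (2 * R)) * (2 * R) := by
            apply mul_le_mul (min_le_right _ _) (hdiam x hx y hy) (norm_nonneg _)
            positivity
        _ = m := by field_simp
        _ ≤ ‖φ x - φ y‖ := hmle

lemma bdry_local {G : Set E} (x : E) (f : E → ℝ)
    (hf : ContDiffAt ℝ 1 f x) (hDf : fderiv ℝ f x ≠ 0)
    (hloc : ∀ᶠ y in nhds x, (y ∈ G ↔ f y < 0)) :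
    ∃ ε > (0:ℝ), ∃ c : ℝ, 0 < c ∧ c < 1/8 ∧ ∀ z ∈ ball x ε ∩ closure G, ∀ ρ : ℝ, 0 < ρ → ρ ≤ ε →
      ∃ p, ball p (c * ρ) ⊆ G ∩ ball z ρ := by
  classical
  -- a C¹ neighbourhood
  obtain ⟨u, hu_nhds, hfu⟩ := hf.contDiffOn le_rfl (by simp)
  set U : Set E := interior u with hUdef
  have hU_open : IsOpen U := isOpen_interior
  have hxU : x ∈ U := mem_interior_iff_mem_nhds.mpr hu_nhds
  have hfU : ContDiffOn ℝ 1 f U := hfu.mono interior_subset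
  have hdiff : ∀ z ∈ U, DifferentiableAt ℝ f z := fun z hz =>
    ((hfU.differentiableOn one_ne_zero).differentiableAt (hU_open.mem_nhds hz))
  have hcont : ContinuousOn (fderiv ℝ f) U := by
    have := hfU.continuousOn_fderivWithin (hU_open.uniqueDiffOn) le_rfl
    apply this.congr
    intro z hz
    exact (fderivWithin_of_isOpen hU_open hz).symm
  set A := fderiv ℝ f x with hAdef
  -- a good direction
  obtain ⟨v0, hv0⟩ : ∃ v0, A v0 ≠ 0 := by
    by_contra hcon
    push_neg at hcon
    exact hDf (ContinuousLinearMap.ext fun w => by simp [hcon w])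
  have hv0ne : v0 ≠ 0 := fun h => hv0 (by simp [h])
  have hv0norm : (0:ℝ) < ‖v0‖ := norm_pos_iff.mpr hv0ne
  set a : ℝ := |A v0| / ‖v0‖ with hadef
  have hapos : 0 < a := div_pos (abs_pos.mpr hv0) hv0norm
  obtain ⟨v, hvnorm, hAv⟩ : ∃ v : E, ‖v‖ = 1 ∧ A v = -a := by
    rcases le_or_gt (A v0) 0 with hA0 | hA0
    · refine ⟨‖v0‖⁻¹ • v0, ?_, ?_⟩
      · simp [norm_smul, abs_of_nonneg (inv_nonneg.mpr hv0norm.le), inv_mul_cancel₀ hv0norm.ne']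
      · rw [_root_.map_smul]
        have habs : |A v0| = -(A v0) := abs_of_nonpos hA0
        simp only [smul_eq_mul, hadef, habs]
        field_simp
    · refine ⟨-(‖v0‖⁻¹ • v0), ?_, ?_⟩
      · simp [norm_smul, abs_of_nonneg (inv_nonneg.mpr hv0norm.le), inv_mul_cancel₀ hv0norm.ne']
      · rw [map_neg, _root_.map_smul]
        have habs : |A v0| = A v0 := abs_of_pos hA0
        simp only [smul_eq_mul, hadef, habs]
        field_simp
  -- continuity of the derivative at x
  have hcontA : ContinuousAt (fderiv ℝ f) x := hcont.continuousAt (hU_open.mem_nhds hxU)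
  obtain ⟨ε0, hε0, hball0⟩ := Metric.continuousAt_iff.mp hcontA (a/8) (by positivity)
  obtain ⟨ε1, hε1, hball1⟩ := Metric.eventually_nhds_iff.mp hloc
  obtain ⟨ε2, hε2, hball2⟩ := Metric.mem_nhds_iff.mp (hU_open.mem_nhds hxU)
  set ε : ℝ := min (min ε0 ε1) ε2 / 4 with hεdef
  have hεpos : 0 < ε := by
    have := lt_min (lt_min hε0 hε1) hε2
    positivity
  have h4ε0 : 4 * ε ≤ ε0 := by
    have h1 : min (min ε0 ε1) ε2 ≤ ε0 := le_trans (min_le_left _ _) (min_le_left _ _)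
    rw [hεdef]; linarith
  have h4ε1 : 4 * ε ≤ ε1 := by
    have h1 : min (min ε0 ε1) ε2 ≤ ε1 := le_trans (min_le_left _ _) (min_le_right _ _)
    rw [hεdef]; linarith
  have h4ε2 : 4 * ε ≤ ε2 := by
    have h1 : min (min ε0 ε1) ε2 ≤ ε2 := min_le_right _ _
    rw [hεdef]; linarith
  have hBU : ball x (4*ε) ⊆ U := fun w hw => hball2 (by
    rw [mem_ball] at hw ⊢; linarith)
  have hBloc : ∀ w ∈ ball x (4*ε), (w ∈ G ↔ f w < 0) := fun w hw => hball1 (by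
    rw [mem_ball] at hw; linarith)
  have hBbound : ∀ w ∈ ball x (4*ε), ‖fderiv ℝ f w - A‖ ≤ a/8 := by
    intro w hw
    rw [mem_ball] at hw
    have := hball0 (show dist w x < ε0 by linarith)
    rw [dist_eq_norm] at this
    exact this.le
  set c : ℝ := min (1/16) (a / (16 * (‖A‖ + 1))) with hcdef
  have hcpos : 0 < c := lt_min (by norm_num) (by positivity)
  have hcsmall : c < 1/8 := lt_of_le_of_lt (min_le_left _ _) (by norm_num)
  have hc16 : c ≤ 1/16 := min_le_left _ _
  have hcA : c * (‖A‖ + 1) ≤ a / 16 := by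
    have h1 : c ≤ a / (16 * (‖A‖ + 1)) := min_le_right _ _
    have h2 : (0:ℝ) < ‖A‖ + 1 := by positivity
    calc c * (‖A‖ + 1) ≤ (a / (16 * (‖A‖ + 1))) * (‖A‖ + 1) := by
          apply mul_le_mul_of_nonneg_right h1 h2.le
      _ = a / 16 := by field_simp
  refine ⟨ε, hεpos, c, hcpos, hcsmall, ?_⟩
  rintro z ⟨hzx, hzG⟩ ρ hρ hρε
  -- f z ≤ 0
  have hzU : z ∈ U := hBU (by rw [mem_ball] at hzx ⊢; linarith)
  have hfz : f z ≤ 0 := by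
    have hne : (nhdsWithin z G).NeBot := mem_closure_iff_nhdsWithin_neBot.mp hzG
    have htend : Tendsto f (nhdsWithin z G) (nhds (f z)) :=
      ((hdiff z hzU).continuousAt.tendsto).mono_left nhdsWithin_le_nhds
    refine le_of_tendsto htend ?_
    have hball_mem : ball x (4*ε) ∈ nhdsWithin z G :=
      nhdsWithin_le_nhds (isOpen_ball.mem_nhds (by rw [mem_ball] at hzx ⊢; linarith))
    filter_upwards [hball_mem, self_mem_nhdsWithin] with w hw1 hw2
    exact ((hBloc w hw1).mp hw2).le
  set p := z + (ρ/2) • v with hpdef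
  refine ⟨p, ?_⟩
  intro w hw
  rw [mem_ball] at hw
  have hwp : ‖w - p‖ < c * ρ := by rw [← dist_eq_norm]; exact hw
  have hpz : ‖p - z‖ = ρ/2 := by
    rw [hpdef]
    simp [norm_smul, hvnorm, abs_of_pos hρ]
  have hwz : ‖w - z‖ < ρ := by
    calc ‖w - z‖ ≤ ‖w - p‖ + ‖p - z‖ := by
          have : w - z = (w - p) + (p - z) := by abel
          rw [this]; exact norm_add_le _ _
      _ < c * ρ + ρ/2 := by linarith
      _ ≤ ρ := by nlinarith [hc16]
  have hdwz : dist w z < ρ := by rw [dist_eq_norm]; exact hwz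
  have hwB : w ∈ ball x (4*ε) := by
    rw [mem_ball] at hzx ⊢
    have htri : dist w x ≤ dist w z + dist z x := dist_triangle _ _ _
    linarith
  have hzB : z ∈ ball x (4*ε) := by rw [mem_ball] at hzx ⊢; linarith
  constructor
  · -- w ∈ G
    rw [hBloc w hwB]
    have hmv := (convex_ball x (4*ε)).norm_image_sub_le_of_norm_fderiv_le'
      (fun u hu => hdiff u (hBU hu)) hBbound hzB hwB
    -- hmv : ‖f w - f z - A (w - z)‖ ≤ a/8 * ‖w - z‖
    have hAwz : A (w - z) ≤ -(ρ/2) * a + a * ρ / 16 := by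
      have hsplit : w - z = (w - p) + (ρ/2) • v := by rw [hpdef]; abel
      have h1 : A (w - p) ≤ ‖A‖ * ‖w - p‖ := le_trans (le_abs_self _) (A.le_opNorm _)
      have h2 : ‖A‖ * ‖w - p‖ ≤ ‖A‖ * (c * ρ) :=
        mul_le_mul_of_nonneg_left hwp.le (norm_nonneg _)
      have h3 : ‖A‖ * (c * ρ) ≤ a * ρ / 16 := by
        calc ‖A‖ * (c * ρ) ≤ (‖A‖ + 1) * (c * ρ) := by nlinarith [hcpos, hρ]
          _ = (c * (‖A‖ + 1)) * ρ := by ring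
          _ ≤ (a/16) * ρ := by nlinarith [hcA, hρ]
          _ = a * ρ / 16 := by ring
      rw [hsplit, map_add, _root_.map_smul, hAv, smul_eq_mul]
      have h4 : A (w - p) ≤ a * ρ / 16 := le_trans h1 (le_trans h2 h3)
      linarith
    have herr : f w - f z - A (w - z) ≤ a/8 * ‖w - z‖ := le_trans (le_abs_self _) hmv
    have hwznorm : ‖w - z‖ ≤ ρ := hwz.le
    have : f w ≤ f z + A (w - z) + a/8 * ‖w - z‖ := by linarith
    calc f w ≤ f z + A (w - z) + a/8 * ‖w - z‖ := this
      _ ≤ 0 + (-(ρ/2) * a + a * ρ / 16) + a/8 * ρ := by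
          have := mul_le_mul_of_nonneg_left hwznorm (by positivity : (0:ℝ) ≤ a/8)
          linarith
      _ = -a * ρ * (1/2 - 1/16 - 1/8) := by ring
      _ < 0 := by nlinarith [hapos, hρ]
  · rw [mem_ball, dist_eq_norm]
    exact hwz

lemma aux_frontier' {X : Type*} [TopologicalSpace X] {s G : Set X} (hG : IsOpen G)
    (hs : IsPreconnected s) (h1 : (s ∩ G).Nonempty) (h2 : (s \ G).Nonempty) :
    (s ∩ frontier G).Nonempty := by
  by_contra hfr
  rw [Set.not_nonempty_iff_eq_empty] at hfr
  have hsub : s ⊆ interior G ∪ (closure G)ᶜ := by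
    intro x hx
    by_cases hxc : x ∈ closure G
    · left
      by_contra hxi
      have : x ∈ s ∩ frontier G := ⟨hx, hxc, hxi⟩
      rw [hfr] at this
      exact this
    · exact Or.inr hxc
  have h1' : (s ∩ interior G).Nonempty := by
    obtain ⟨x, hxs, hxG⟩ := h1
    exact ⟨x, hxs, by rwa [hG.interior_eq]⟩
  have h2' : (s ∩ (closure G)ᶜ).Nonempty := by
    obtain ⟨x, hxs, hxG⟩ := h2
    refine ⟨x, hxs, fun hxc => ?_⟩
    have : x ∈ s ∩ frontier G := ⟨hxs, hxc, by rwa [hG.interior_eq]⟩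
    rw [hfr] at this
    exact this
  obtain ⟨x, _, hxu, hxv⟩ := hs (interior G) (closure G)ᶜ isOpen_interior
    isClosed_closure.isOpen_compl hsub h1' h2'
  exact hxv (subset_closure (interior_subset hxu))

lemma corkscrew {G : Set E} (hGopen : IsOpen G) (hGbdd : Bornology.IsBounded G)
    (hGbdry : ∀ x ∈ frontier G, ∃ f : E → ℝ,
      ContDiffAt ℝ 1 f x ∧ fderiv ℝ f x ≠ 0 ∧ ∀ᶠ y in nhds x, (y ∈ G ↔ f y < 0)) :
    ∃ c : ℝ, 0 < c ∧ c < 1/2 ∧ ∃ ρb > (0:ℝ), ∀ y ∈ closure G, ∀ ρ : ℝ, 0 < ρ → ρ ≤ ρb →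
      ∃ p, ball p (c * ρ) ⊆ G ∩ ball y ρ := by
  classical
  have hFcomp : IsCompact (frontier G) :=
    Metric.isCompact_of_isClosed_isBounded isClosed_frontier
      (hGbdd.closure.subset frontier_subset_closure)
  have H : ∀ x : frontier G, ∃ εc : ℝ × ℝ, 0 < εc.1 ∧ 0 < εc.2 ∧ εc.2 < 1/8 ∧
      ∀ z ∈ ball (x:E) εc.1 ∩ closure G, ∀ ρ : ℝ, 0 < ρ → ρ ≤ εc.1 →
        ∃ p, ball p (εc.2 * ρ) ⊆ G ∩ ball z ρ := by
    intro x
    obtain ⟨f, hf, hDf, hloc⟩ := hGbdry x x.2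
    obtain ⟨ε, hε, c, hc, hc8, hp⟩ := bdry_local (x:E) f hf hDf hloc
    exact ⟨(ε, c), hε, hc, hc8, hp⟩
  choose εc h1 h2 h3 h4 using H
  have hcover : frontier G ⊆ ⋃ x : frontier G, ball (x:E) ((εc x).1 / 2) := by
    intro z hz
    exact Set.mem_iUnion.mpr ⟨⟨z, hz⟩, by simpa using half_pos (h1 ⟨z, hz⟩)⟩
  obtain ⟨t, ht⟩ := hFcomp.elim_finite_subcover (fun x : frontier G => ball (x:E) ((εc x).1 / 2))
    (fun _ => isOpen_ball) hcover
  rcases t.eq_empty_or_nonempty with hte | htne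
  · -- empty frontier (relative to cover): frontier G = ∅
    have hFe : frontier G = ∅ := by
      rw [Set.eq_empty_iff_forall_notMem]
      intro z hz
      have := ht hz
      rw [hte] at this
      simpa using this
    refine ⟨1/4, by norm_num, by norm_num, 1, one_pos, fun y hy ρ hρ _ => ⟨y, ?_⟩⟩
    have hsub : ball y (ρ/2) ⊆ G := by
      by_contra hcon
      obtain ⟨w, hw1, hw2⟩ : ∃ w ∈ ball y (ρ/2), w ∉ G := by
        rcases Set.not_subset.mp hcon with ⟨w, hw1, hw2⟩; exact ⟨w, hw1, hw2⟩
      have hGne : (ball y (ρ/2) ∩ G).Nonempty := by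
        have := _root_.mem_closure_iff.mp hy (ball y (ρ/2)) isOpen_ball
          (mem_ball_self (by linarith))
        exact this
      obtain ⟨q, -, hq2⟩ := aux_frontier' hGopen (convex_ball y (ρ/2)).isPreconnected
        hGne ⟨w, hw1, hw2⟩
      rw [hFe] at hq2
      exact hq2
    intro w hw
    rw [mem_ball] at hw
    constructor
    · exact hsub (by rw [mem_ball]; linarith)
    · rw [mem_ball]; linarith
  · set δ : ℝ := t.inf' htne (fun x => (εc x).1 / 2) with hδdef
    set c0 : ℝ := t.inf' htne (fun x => (εc x).2) with hc0def
    have hδpos : 0 < δ := by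
      rw [hδdef, Finset.lt_inf'_iff]
      exact fun a _ => half_pos (h1 a)
    have hc0pos : 0 < c0 := by
      rw [hc0def, Finset.lt_inf'_iff]
      exact fun a _ => h2 a
    have hc0half : c0 < 1/2 := by
      obtain ⟨a, ha⟩ := htne
      have := Finset.inf'_le (fun x => (εc x).2) ha
      have := h3 a
      calc c0 ≤ (εc a).2 := Finset.inf'_le _ ha
        _ < 1/8 := h3 a
        _ < 1/2 := by norm_num
    refine ⟨min c0 (1/4), lt_min hc0pos (by norm_num),
      lt_of_le_of_lt (min_le_right _ _) (by norm_num), δ, hδpos, fun y hy ρ hρ hρδ => ?_⟩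
    by_cases hsub : ball y (ρ/2) ⊆ G
    · refine ⟨y, fun w hw => ?_⟩
      rw [mem_ball] at hw
      have hmc : min c0 (1/4) * ρ ≤ ρ/2 := by
        have : min c0 (1/4) ≤ 1/4 := min_le_right _ _
        nlinarith
      constructor
      · exact hsub (by rw [mem_ball]; linarith)
      · rw [mem_ball]; linarith
    · obtain ⟨w, hw1, hw2⟩ : ∃ w ∈ ball y (ρ/2), w ∉ G := by
        rcases Set.not_subset.mp hsub with ⟨w, hw1, hw2⟩; exact ⟨w, hw1, hw2⟩
      have hGne : (ball y (ρ/2) ∩ G).Nonempty :=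
        _root_.mem_closure_iff.mp hy (ball y (ρ/2)) isOpen_ball (mem_ball_self (by linarith))
      obtain ⟨q, hq1, hq2⟩ := aux_frontier' hGopen (convex_ball y (ρ/2)).isPreconnected
        hGne ⟨w, hw1, hw2⟩
      obtain ⟨x, hxt, hqx⟩ := Set.mem_iUnion₂.mp (ht hq2)
      have hδx : δ ≤ (εc x).1 / 2 := Finset.inf'_le _ hxt
      have hyx : y ∈ ball (x:E) (εc x).1 := by
        rw [mem_ball]
        have htri : dist y (x:E) ≤ dist y q + dist q (x:E) := dist_triangle _ _ _
        rw [mem_ball] at hq1 hqx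
        rw [dist_comm] at hq1
        linarith
      obtain ⟨p, hp⟩ := h4 x y ⟨hyx, hy⟩ ρ hρ (by linarith)
      refine ⟨p, fun w hw => hp ?_⟩
      rw [mem_ball] at hw ⊢
      have : min c0 (1/4) ≤ (εc x).2 :=
        le_trans (min_le_left _ _) (Finset.inf'_le _ hxt)
      have h5 : min c0 (1/4) * ρ ≤ (εc x).2 * ρ := by nlinarith
      linarith

theorem stmt_15 {k n : ℕ} (hkn : k ≤ n)
    (G : Set (EuclideanSpace ℝ (Fin k))) (hGopen : IsOpen G)
    (hGbdd : Bornology.IsBounded G)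
    (hGbdry : ∀ x ∈ frontier G, ∃ f : EuclideanSpace ℝ (Fin k) → ℝ,
      ContDiffAt ℝ 1 f x ∧ fderiv ℝ f x ≠ 0 ∧ ∀ᶠ y in nhds x, (y ∈ G ↔ f y < 0))
    (φ : EuclideanSpace ℝ (Fin k) → EuclideanSpace ℝ (Fin n))
    (hφ : ContDiff ℝ 1 φ) (hinj : Set.InjOn φ (closure G))
    (hJ : ∀ y ∈ closure G, 0 < (Matrix.transpose (Dmat φ y) * Dmat φ y).det) :
    ∃ C rbar : ℝ, 0 < C ∧ 0 < rbar ∧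
      ∀ x ∈ spt ((Measure.hausdorffMeasure (k : ℝ)).restrict (φ '' G)), ∀ r : ℝ, 0 < r → r ≤ rbar →
        ENNReal.ofReal (r ^ (k : ℕ) / C) ≤ (Measure.hausdorffMeasure (k : ℝ)).restrict (φ '' G) (Metric.ball x r) ∧
          (Measure.hausdorffMeasure (k : ℝ)).restrict (φ '' G) (Metric.ball x r) ≤
            ENNReal.ofReal (C * r ^ (k : ℕ)) := by
  classical
  haveI := haar_inst k
  set S : Set (EuclideanSpace ℝ (Fin k)) := closure G with hSdef
  have hScomp : IsCompact S :=
    Metric.isCompact_of_isClosed_isBounded isClosed_closure hGbdd.closure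
  have hDinj : ∀ y ∈ S, Function.Injective (fderiv ℝ φ y) := fun y hy =>
    fderiv_inj φ y (hJ y hy)
  obtain ⟨c, hc, hanti⟩ := global_antilip hφ hScomp hinj hDinj
  obtain ⟨L, hL, hlip⟩ := global_lip hφ hScomp.isBounded
  obtain ⟨c1, hc1, hc1half, ρb, hρb, hcork⟩ := corkscrew hGopen hGbdd hGbdry
  set β := μH[(k:ℝ)] (Metric.ball (0 : EuclideanSpace ℝ (Fin k)) 1) with hβdef
  have hβpos : 0 < β := measure_ball_pos _ _ one_pos
  have hβlt : β < ⊤ := measure_ball_lt_top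
  set b0 := β.toReal with hb0def
  have hb0pos : 0 < b0 := ENNReal.toReal_pos hβpos.ne' hβlt.ne
  have hβeq : β = ENNReal.ofReal b0 := (ENNReal.ofReal_toReal hβlt.ne).symm
  -- antilipschitz constant as ℝ≥0
  set K : ℝ≥0 := Real.toNNReal c⁻¹ with hKdef
  have hKr : (K : ℝ) = c⁻¹ := Real.coe_toNNReal _ (inv_nonneg.mpr hc.le)
  have hKrpos : (0:ℝ) < (K:ℝ) := by rw [hKr]; positivity
  have hanti' : ∀ x ∈ S, ∀ y ∈ S, dist x y ≤ (K : ℝ) * dist (φ x) (φ y) := by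
    intro x hx y hy
    have h0 := hanti x hx y hy
    rw [hKr, dist_eq_norm, dist_eq_norm]
    rw [le_inv_mul_iff₀ hc]
    exact h0
  set Lnn : ℝ≥0 := Real.toNNReal L with hLnndef
  have hLr : (Lnn : ℝ) = L := Real.coe_toNNReal _ hL.le
  -- the two constants
  set Dlow : ℝ := ((K:ℝ) * L / c1) ^ k / b0 with hDlowdef
  set Dup : ℝ := (2 * L / c) ^ k * b0 with hDupdef
  have hDlowpos : 0 < Dlow := by
    rw [hDlowdef]
    have : (0:ℝ) < (K:ℝ) * L / c1 := by positivity
    positivity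
  have hDuppos : 0 < Dup := by
    rw [hDupdef]
    have : (0:ℝ) < 2 * L / c := by positivity
    positivity
  refine ⟨max Dlow Dup, L * ρb, lt_of_lt_of_le hDlowpos (le_max_left _ _), by positivity,
    fun x hx r hr hrbar => ?_⟩
  -- x lies in φ '' S
  have hximg : x ∈ φ '' S := by
    have hxcl : x ∈ closure (φ '' G) := by
      by_contra hxc
      rw [Metric.mem_closure_iff] at hxc
      push_neg at hxc
      obtain ⟨ε, hε, hsep⟩ := hxc
      have hdisj : Metric.ball x ε ∩ (φ '' G) = ∅ := by
        rw [Set.eq_empty_iff_forall_notMem]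
        rintro w ⟨hw1, hw2⟩
        exact absurd (Metric.mem_ball'.mp hw1) (not_lt.mpr (hsep w hw2))
      have h0 := hx ε hε
      rw [Measure.restrict_apply measurableSet_ball, hdisj] at h0
      simp at h0
    exact closure_minimal (Set.image_mono subset_closure)
      ((hScomp.image hφ.continuous).isClosed) hxcl
  obtain ⟨y, hyS, hyx⟩ := hximg
  constructor
  · -- lower bound
    have hρ : 0 < r / L := by positivity
    have hρb' : r / L ≤ ρb := by
      rw [div_le_iff₀ hL]
      calc r ≤ L * ρb := hrbar
        _ = ρb * L := by ring
    obtain ⟨p, hp⟩ := hcork y hyS (r / L) hρ hρb'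
    set A : Set (EuclideanSpace ℝ (Fin k)) := G ∩ Metric.ball y (r / L) with hAdef
    have hAS : A ⊆ S := fun z hz => subset_closure hz.1
    have himgsub : φ '' A ⊆ Metric.ball x r ∩ (φ '' G) := by
      rintro w ⟨z, hz, rfl⟩
      refine ⟨?_, Set.mem_image_of_mem φ hz.1⟩
      rw [Metric.mem_ball, dist_eq_norm, ← hyx]
      calc ‖φ z - φ y‖ ≤ L * ‖z - y‖ := hlip z (hAS hz) y hyS
        _ < L * (r / L) := by
            have := Metric.mem_ball.mp hz.2
            rw [dist_eq_norm] at this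
            exact (mul_lt_mul_iff_right₀ hL).mpr this
        _ = r := by field_simp
    have hstep1 : μH[(k:ℝ)] A ≤ (K : ℝ≥0∞) ^ (k:ℝ) * μH[(k:ℝ)] (φ '' A) :=
      haus_le_image hanti' hAS (Nat.cast_nonneg k)
    have hstep2 : μH[(k:ℝ)] (Metric.ball p (c1 * (r / L))) ≤ μH[(k:ℝ)] A :=
      measure_mono hp
    have hball : μH[(k:ℝ)] (Metric.ball p (c1 * (r / L)))
        = ENNReal.ofReal ((c1 * (r / L)) ^ k) * β :=
      haus_ball_scaling p (by positivity)
    -- convert K-power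
    have hKpow : (K : ℝ≥0∞) ^ (k:ℝ) = ENNReal.ofReal ((K:ℝ) ^ k) := by
      rw [ENNReal.rpow_natCast, ← ENNReal.coe_pow, ← NNReal.coe_pow, ENNReal.ofReal_coe_nnreal]
    have hKpow_ne_top : (K : ℝ≥0∞) ^ (k:ℝ) ≠ ⊤ := by
      rw [hKpow]; exact ENNReal.ofReal_ne_top
    have hKpow_ne_zero : (K : ℝ≥0∞) ^ (k:ℝ) ≠ 0 := by
      rw [hKpow]
      simp only [ne_eq, ENNReal.ofReal_eq_zero, not_le]
      positivity
    have hlow1 : ENNReal.ofReal ((c1 * (r / L)) ^ k) * β / ((K : ℝ≥0∞) ^ (k:ℝ))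
        ≤ μH[(k:ℝ)] (φ '' A) := by
      rw [ENNReal.div_le_iff hKpow_ne_zero hKpow_ne_top]
      calc ENNReal.ofReal ((c1 * (r / L)) ^ k) * β
          = μH[(k:ℝ)] (Metric.ball p (c1 * (r / L))) := hball.symm
        _ ≤ μH[(k:ℝ)] A := hstep2
        _ ≤ (K : ℝ≥0∞) ^ (k:ℝ) * μH[(k:ℝ)] (φ '' A) := hstep1
        _ = μH[(k:ℝ)] (φ '' A) * (K : ℝ≥0∞) ^ (k:ℝ) := mul_comm _ _
    have hmeas : ENNReal.ofReal ((c1 * (r / L)) ^ k) * β / ((K : ℝ≥0∞) ^ (k:ℝ))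
        ≤ (Measure.hausdorffMeasure (k : ℝ)).restrict (φ '' G) (Metric.ball x r) := by
      rw [Measure.restrict_apply measurableSet_ball]
      exact le_trans hlow1 (measure_mono himgsub)
    refine le_trans ?_ hmeas
    rw [hβeq, ← ENNReal.ofReal_mul (by positivity), hKpow,
      ← ENNReal.ofReal_div_of_pos (by positivity)]
    apply ENNReal.ofReal_le_ofReal
    rw [div_le_div_iff₀ (by positivity) (by positivity)]
    have hkey : (c1 * (r / L)) ^ k * b0 * (max Dlow Dup) ≥ r ^ k * (K:ℝ) ^ k := by
      have hmax : Dlow ≤ max Dlow Dup := le_max_left _ _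
      have h1 : (c1 * (r / L)) ^ k * b0 * Dlow = r ^ k * (K:ℝ) ^ k := by
        rw [hDlowdef]
        field_simp
        have e1 : L ^ k * L⁻¹ ^ k = 1 := by rw [← mul_pow, mul_inv_cancel₀ hL.ne', one_pow]
        have e2 : c1 ^ k * c1⁻¹ ^ k = 1 := by rw [← mul_pow, mul_inv_cancel₀ hc1.ne', one_pow]
        linear_combination (c1 ^ k * c1⁻¹ ^ k * r ^ k * (K:ℝ) ^ k) * e1 + (r ^ k * (K:ℝ) ^ k) * e2
      calc (c1 * (r / L)) ^ k * b0 * (max Dlow Dup)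
          ≥ (c1 * (r / L)) ^ k * b0 * Dlow := by
            apply mul_le_mul_of_nonneg_left hmax (by positivity)
        _ = r ^ k * (K:ℝ) ^ k := h1
    linarith [hkey]
  · -- upper bound
    have h2rc : (0:ℝ) < 2 * r / c := by positivity
    set A : Set (EuclideanSpace ℝ (Fin k)) := G ∩ Metric.ball y (2 * r / c) with hAdef
    have hAS : A ⊆ S := fun z hz => subset_closure hz.1
    have hsub2 : Metric.ball x r ∩ (φ '' G) ⊆ φ '' A := by
      rintro w ⟨hw1, z, hzG, rfl⟩
      refine ⟨z, ⟨hzG, ?_⟩, rfl⟩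
      rw [Metric.mem_ball, dist_eq_norm]
      have hzS : z ∈ S := subset_closure hzG
      have h1 : c * ‖z - y‖ ≤ ‖φ z - φ y‖ := hanti z hzS y hyS
      have h2 : ‖φ z - φ y‖ < r := by
        have h3 := Metric.mem_ball.mp hw1
        rw [← hyx, dist_eq_norm] at h3
        exact h3
      rw [lt_div_iff₀ hc]
      calc ‖z - y‖ * c = c * ‖z - y‖ := mul_comm _ _
        _ ≤ ‖φ z - φ y‖ := h1
        _ < r := h2
        _ ≤ 2 * r := by linarith
    have hliponA : LipschitzOnWith Lnn φ A := by
      rw [lipschitzOnWith_iff_dist_le_mul]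
      intro z hz w hw
      rw [dist_eq_norm, dist_eq_norm, hLr]
      exact hlip z (hAS hz) w (hAS hw)
    have hstep : μH[(k:ℝ)] (φ '' A) ≤ (Lnn : ℝ≥0∞) ^ (k:ℝ) * μH[(k:ℝ)] A :=
      hliponA.hausdorffMeasure_image_le (Nat.cast_nonneg k)
    have hstep2 : μH[(k:ℝ)] A ≤ ENNReal.ofReal ((2 * r / c) ^ k) * β := by
      rw [← haus_ball_scaling y h2rc]
      exact measure_mono (Set.inter_subset_right)
    have hLpow : (Lnn : ℝ≥0∞) ^ (k:ℝ) = ENNReal.ofReal (L ^ k) := by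
      rw [ENNReal.rpow_natCast, ← ENNReal.coe_pow, ← ENNReal.ofReal_coe_nnreal,
        NNReal.coe_pow, hLr]
    rw [Measure.restrict_apply measurableSet_ball]
    calc μH[(k:ℝ)] (Metric.ball x r ∩ (φ '' G)) ≤ μH[(k:ℝ)] (φ '' A) := measure_mono hsub2
      _ ≤ (Lnn : ℝ≥0∞) ^ (k:ℝ) * μH[(k:ℝ)] A := hstep
      _ ≤ (Lnn : ℝ≥0∞) ^ (k:ℝ) * (ENNReal.ofReal ((2 * r / c) ^ k) * β) := by
          exact mul_le_mul_right hstep2 _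
      _ = ENNReal.ofReal (L ^ k * ((2 * r / c) ^ k * b0)) := by
          rw [hLpow, hβeq, ← ENNReal.ofReal_mul (by positivity),
            ← ENNReal.ofReal_mul (by positivity)]
      _ ≤ ENNReal.ofReal ((max Dlow Dup) * r ^ k) := by
          apply ENNReal.ofReal_le_ofReal
          have h1 : L ^ k * ((2 * r / c) ^ k * b0) = Dup * r ^ k := by
            rw [hDupdef]
            field_simp
            ring
          rw [h1]
          apply mul_le_mul_of_nonneg_right (le_max_right _ _) (by positivity)
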